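/- Let ρ_t be a density matrix (positive semidefinite, trace one) on ℂ^d whose largest eigenvalue is at least 1/2, and let |ψ⟩ be a corresponding unit eigenvector. Then ‖ρ_t − |ψ⟩⟨ψ|‖₂ ≤ √2 · (1 − Tr(ρ_t²)). -/

import Mathlib

open Matrix
open scoped ComplexOrder

noncomputable def frobNorm {d : ℕ} (A : Matrix (Fin d) (Fin d) ℂ) : ℝ :=
  Real.sqrt (∑ i, ∑ j, ‖A i j‖ ^ 2)

lemma aux_trace_eq {d : ℕ} {A : Matrix (Fin d) (Fin d) ℂ} (hA : A.IsHermitian) :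
    A.trace = ∑ i, (hA.eigenvalues i : ℂ) := by
  have hU := Matrix.mem_unitaryGroup_iff'.mp (Matrix.IsHermitian.eigenvectorUnitary hA).2
  have hU' : ∀ X : Matrix (Fin d) (Fin d) ℂ,
      star (Matrix.IsHermitian.eigenvectorUnitary hA : Matrix (Fin d) (Fin d) ℂ) *
      ((Matrix.IsHermitian.eigenvectorUnitary hA : Matrix (Fin d) (Fin d) ℂ) * X) = X := by
    intro X; rw [← mul_assoc, hU, one_mul]
  conv_lhs => rw [hA.spectral_theorem, Unitary.conjStarAlgAut_apply]
  rw [Matrix.trace_mul_comm, hU', Matrix.trace_diagonal]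
  rfl

lemma aux_trace_sq_eq {d : ℕ} {A : Matrix (Fin d) (Fin d) ℂ} (hA : A.IsHermitian) :
    (A * A).trace = ∑ i, ((hA.eigenvalues i : ℂ))^2 := by
  have hU := Matrix.mem_unitaryGroup_iff'.mp (Matrix.IsHermitian.eigenvectorUnitary hA).2
  have hU' : ∀ X : Matrix (Fin d) (Fin d) ℂ,
      star (Matrix.IsHermitian.eigenvectorUnitary hA : Matrix (Fin d) (Fin d) ℂ) *
      ((Matrix.IsHermitian.eigenvectorUnitary hA : Matrix (Fin d) (Fin d) ℂ) * X) = X := by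
    intro X; rw [← mul_assoc, hU, one_mul]
  conv_lhs => rw [hA.spectral_theorem, Unitary.conjStarAlgAut_apply]
  rw [Matrix.trace_mul_comm]
  simp only [mul_assoc]
  rw [hU']
  rw [Matrix.trace_mul_comm]
  simp only [mul_assoc]
  rw [hU, mul_one, diagonal_mul_diagonal, Matrix.trace_diagonal]
  simp [sq]

lemma aux_frob {d : ℕ} {A : Matrix (Fin d) (Fin d) ℂ} (hA : A.IsHermitian) :
    (∑ i, ∑ j, ‖A i j‖ ^ 2 : ℝ) = ((A * A).trace).re := by
  have e : ((A * A).trace) = ((∑ i, ∑ j, ‖A i j‖ ^ 2 : ℝ) : ℂ) := by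
    rw [Matrix.trace]
    push_cast
    refine Finset.sum_congr rfl fun i _ => ?_
    rw [Matrix.diag_apply, Matrix.mul_apply]
    refine Finset.sum_congr rfl fun j _ => ?_
    have hji : A j i = star (A i j) := by
      conv_lhs => rw [← hA.eq]
      rw [conjTranspose_apply]
    rw [hji]
    simpa using RCLike.mul_conj (A i j)
  rw [e, Complex.ofReal_re]

theorem frobNorm_sub_top_eigvec_le {d : ℕ} (ρ : Matrix (Fin d) (Fin d) ℂ)
    (hρ : ρ.PosSemidef) (htr : ρ.trace = 1)
    (lam : ℝ) (ψ : Fin d → ℂ)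
    (hψnorm : ∑ i, ‖ψ i‖ ^ 2 = 1)
    (heig : ρ *ᵥ ψ = (lam : ℂ) • ψ)
    (hmax : ∀ (μ : ℝ) (v : Fin d → ℂ), v ≠ 0 → ρ *ᵥ v = (μ : ℂ) • v → μ ≤ lam)
    (hlam : 1 / 2 ≤ lam) :
    frobNorm (ρ - Matrix.vecMulVec ψ (star ψ)) ≤
      Real.sqrt 2 * (1 - ((ρ * ρ).trace).re) := by
  set P : Matrix (Fin d) (Fin d) ℂ := Matrix.vecMulVec ψ (star ψ) with hPdef
  have hψdot : star ψ ⬝ᵥ ψ = 1 := by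
    have e : ∀ k, star ψ k * ψ k = ((‖ψ k‖^2 : ℝ) : ℂ) := fun k => by
      simpa using RCLike.conj_mul (ψ k)
    rw [dotProduct, Finset.sum_congr rfl fun k _ => e k, ← Complex.ofReal_sum, hψnorm,
      Complex.ofReal_one]
  have heig' : ∀ i, ∑ k, ρ i k * ψ k = lam * ψ i := by
    intro i
    simpa [Matrix.mulVec, dotProduct] using congrFun heig i
  have hρP : ρ * P = (lam : ℂ) • P := by
    ext i j
    simp only [Matrix.mul_apply, hPdef, vecMulVec_apply, Matrix.smul_apply, smul_eq_mul,
      Pi.star_apply]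
    calc ∑ k, ρ i k * (ψ k * star (ψ j)) = (∑ k, ρ i k * ψ k) * star (ψ j) := by
          rw [Finset.sum_mul]; exact Finset.sum_congr rfl fun k _ => (mul_assoc _ _ _).symm
      _ = (lam : ℂ) * (ψ i * star (ψ j)) := by rw [heig' i]; ring
  have hPH : P.IsHermitian := by
    ext i j
    simp only [conjTranspose_apply, hPdef, vecMulVec_apply, Pi.star_apply, star_mul', star_star]
    ring
  have hPρ : P * ρ = (lam : ℂ) • P := by
    have h := congrArg Matrix.conjTranspose hρP
    rwa [conjTranspose_mul, hρ.1.eq, hPH.eq, conjTranspose_smul, hPH.eq, Complex.star_def,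
      Complex.conj_ofReal] at h
  have hPP : P * P = P := by
    ext i j
    simp only [Matrix.mul_apply, hPdef, vecMulVec_apply, Pi.star_apply]
    calc ∑ k, ψ i * star (ψ k) * (ψ k * star (ψ j))
        = (∑ k, star (ψ k) * ψ k) * (ψ i * star (ψ j)) := by
          rw [Finset.sum_mul]; exact Finset.sum_congr rfl fun k _ => by ring
      _ = ψ i * star (ψ j) := by
          rw [show (∑ k, star (ψ k) * ψ k) = star ψ ⬝ᵥ ψ from rfl, hψdot, one_mul]
  have htrP : P.trace = 1 := by
    rw [Matrix.trace]
    have e : ∀ i, P.diag i = star (ψ i) * ψ i := fun i => by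
      simp [hPdef, vecMulVec_apply, mul_comm]
    rw [Finset.sum_congr rfl fun i _ => e i]
    exact hψdot
  -- the residual matrix σ
  set σ : Matrix (Fin d) (Fin d) ℂ := ρ - (lam : ℂ) • P with hσdef
  have hlamstar : star ((lam : ℝ) : ℂ) = ((lam : ℝ) : ℂ) := by
    rw [Complex.star_def, Complex.conj_ofReal]
  have hσH : σ.IsHermitian := by
    have h2 : ((lam : ℂ) • P).IsHermitian := by
      unfold Matrix.IsHermitian
      rw [conjTranspose_smul, hPH.eq, hlamstar]
    exact hρ.1.sub h2
  have hσeq : σ = ((1 : Matrix (Fin d) (Fin d) ℂ) - P)ᴴ * ρ * (1 - P) := by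
    rw [conjTranspose_sub, conjTranspose_one, hPH.eq, sub_mul, one_mul, hPρ,
      sub_mul, mul_sub, mul_one, hρP, mul_sub, mul_one, smul_mul_assoc, hPP, sub_self, sub_zero]
  have hσpsd : σ.PosSemidef := hσeq ▸ hρ.conjTranspose_mul_mul_same _
  have hPσ : P * σ = 0 := by
    rw [hσdef, mul_sub, hPρ, Matrix.mul_smul, hPP, sub_self]
  have hσP : σ * P = 0 := by
    rw [hσdef, sub_mul, hρP, smul_mul_assoc, hPP, sub_self]
  have hρdecomp : ρ = (lam : ℂ) • P + σ := by rw [hσdef]; abel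
  have hρsq : ρ * ρ = ((lam : ℂ)^2) • P + σ * σ := by
    conv_lhs => rw [hρdecomp]
    simp only [add_mul, mul_add, smul_mul_assoc, Matrix.mul_smul, hPP, hPσ, hσP,
      smul_zero, add_zero, zero_add, smul_smul]
    rw [sq]
  have hdiff : ρ - P = ((lam : ℂ) - 1) • P + σ := by
    rw [hσdef, sub_smul, one_smul]; abel
  have hdiffsq : (ρ - P) * (ρ - P) = (((lam : ℂ) - 1)^2) • P + σ * σ := by
    rw [hdiff]
    simp only [add_mul, mul_add, smul_mul_assoc, Matrix.mul_smul, hPP, hPσ, hσP,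
      smul_zero, add_zero, zero_add, smul_smul]
    rw [sq]
  -- eigenvalues of σ
  set ν : Fin d → ℝ := hσH.eigenvalues with hνdef
  have hν0 : ∀ i, 0 ≤ ν i := hσpsd.eigenvalues_nonneg
  have hνlam : ∀ i, ν i ≤ lam := by
    intro i
    rcases eq_or_ne (ν i) 0 with h0 | h0
    · rw [h0]; linarith
    · set v : Fin d → ℂ := ⇑(hσH.eigenvectorBasis i) with hvdef
      have hv : σ *ᵥ v = (ν i : ℂ) • v := by
        have h := hσH.mulVec_eigenvectorBasis i
        funext k
        have := congrFun h k
        simpa [Pi.smul_apply, Complex.real_smul] using this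
      have hvne : v ≠ 0 := by
        intro h
        exact hσH.eigenvectorBasis.orthonormal.ne_zero i (by ext k; exact congrFun h k)
      have hPv : P *ᵥ v = 0 := by
        have h1 : P *ᵥ (σ *ᵥ v) = 0 := by rw [mulVec_mulVec, hPσ, zero_mulVec]
        rw [hv, mulVec_smul] at h1
        rcases smul_eq_zero.mp h1 with h | h
        · exact absurd (Complex.ofReal_eq_zero.mp h) h0
        · exact h
      have hρv : ρ *ᵥ v = (ν i : ℂ) • v := by
        rw [hρdecomp, add_mulVec, smul_mulVec, hPv, smul_zero, zero_add, hv]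
      exact hmax (ν i) v hvne hρv
  have htrσ : σ.trace = ∑ i, (ν i : ℂ) := aux_trace_eq hσH
  have htrσsq : (σ * σ).trace = ∑ i, ((ν i : ℂ))^2 := aux_trace_sq_eq hσH
  -- sum of eigenvalues of σ
  have hsum : ∑ i, ν i = 1 - lam := by
    have h1 : σ.trace = ((1 - lam : ℝ) : ℂ) := by
      rw [hσdef, Matrix.trace_sub, Matrix.trace_smul, htr, htrP, smul_eq_mul, mul_one]
      push_cast; ring
    rw [h1] at htrσ
    exact_mod_cast htrσ.symm
  set q : ℝ := ∑ i, ν i ^ 2 with hqdef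
  have hs : ((ρ * ρ).trace).re = lam ^ 2 + q := by
    rw [hρsq, Matrix.trace_add, Matrix.trace_smul, htrP, smul_eq_mul, mul_one, htrσsq]
    norm_cast
  have hρPH : (ρ - P).IsHermitian := hρ.1.sub hPH
  have hfrob : frobNorm (ρ - P) = Real.sqrt ((lam - 1) ^ 2 + q) := by
    unfold frobNorm
    congr 1
    rw [aux_frob hρPH, hdiffsq, Matrix.trace_add, Matrix.trace_smul, htrP, smul_eq_mul, mul_one,
      htrσsq]
    norm_cast
  -- numeric inequalities
  have hq1 : q ≤ (1 - lam) ^ 2 := by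
    have h : ∀ i ∈ Finset.univ, ν i ^ 2 ≤ ν i * (1 - lam) := by
      intro i _
      have hile : ν i ≤ 1 - lam :=
        hsum ▸ Finset.single_le_sum (fun j _ => hν0 j) (Finset.mem_univ i)
      nlinarith [hν0 i]
    calc q ≤ ∑ i, ν i * (1 - lam) := Finset.sum_le_sum h
      _ = (1 - lam) ^ 2 := by rw [← Finset.sum_mul, hsum]; ring
  have hq2 : q ≤ lam * (1 - lam) := by
    have h : ∀ i ∈ Finset.univ, ν i ^ 2 ≤ lam * ν i := by
      intro i _; nlinarith [hν0 i, hνlam i]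
    calc q ≤ ∑ i, lam * ν i := Finset.sum_le_sum h
      _ = lam * (1 - lam) := by rw [← Finset.mul_sum, hsum]
  have ht0 : 0 ≤ 1 - lam := by
    rw [← hsum]; exact Finset.sum_nonneg fun i _ => hν0 i
  rw [hfrob, hs]
  set s : ℝ := lam ^ 2 + q with hsdef
  have hslam : s ≤ lam := by nlinarith [hq2]
  have h1s : 0 ≤ 1 - s := by nlinarith
  have hkey : (lam - 1) ^ 2 + q ≤ (Real.sqrt 2 * (1 - s)) ^ 2 := by
    rw [mul_pow, Real.sq_sqrt (by norm_num : (0:ℝ) ≤ 2)]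
    nlinarith [hq1, mul_nonneg (by linarith : (0:ℝ) ≤ lam - s) (by linarith : (0:ℝ) ≤ 2 - s - lam)]
  calc Real.sqrt ((lam - 1) ^ 2 + q) ≤ Real.sqrt ((Real.sqrt 2 * (1 - s)) ^ 2) :=
        Real.sqrt_le_sqrt hkey
    _ = Real.sqrt 2 * (1 - s) := Real.sqrt_sq (by positivity)
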